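/- Let Z = (E, κ₀, κ₁) be a regular connective foliation (κ₀ ⊆ κ₁), and let ρ be a clear and distinct connective representation of an integral connectivity space (X, κ_X) in a connectivity space (Y, κ_Y). Let ℱ(Z) be the set of leaves of Z, let κ↓ = {𝒜 ⊆ ℱ(Z) : ⋃𝒜 ∈ κ₁} be the induced leaf structure on ℱ(Z), and let κ₀' be the connectivity structure on Y generated by {K ∈ κ_Y : ∃ a ∈ X, K ⊆ ρ(a)}. Call a pair (α, β) a representation morphism if α : ℱ(Z) → X satisfies α''𝒜 ∈ κ_X for every 𝒜 ∈ κ↓, β : E → Y satisfies β''K ∈ κ_Y for every K ∈ κ₁, and β''F ⊆ ρ(α(F)) for every leaf F ∈ ℱ(Z); call β : E → Y a foliation morphism if β''K ∈ κ₀' for every K ∈ κ₀ and β''K ∈ κ_Y for every K ∈ κ₁. Then the map (α, β) ↦ β is a bijection from the set of representation morphisms onto the set of foliation morphisms. -/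

import Mathlib

/-- A connectivity structure on `E`. -/
def IsConnectivity {E : Type*} (κ : Set (Set E)) : Prop :=
  ∅ ∈ κ ∧ ∀ ℐ ⊆ κ, (⋂₀ ℐ).Nonempty → ⋃₀ ℐ ∈ κ

/-- Integral: every singleton is connected. -/
def IsIntegralCnct {E : Type*} (κ : Set (Set E)) : Prop :=
  ∀ x : E, {x} ∈ κ

/-- The connectivity structure generated by a family of subsets: the intersection of
all connectivity structures containing it. -/
def generated {E : Type*} (𝒜 : Set (Set E)) : Set (Set E) :=
  ⋂₀ {κ | IsConnectivity κ ∧ 𝒜 ⊆ κ}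

/-- A leaf: a maximal nonempty connected subset. -/
def IsLeaf {E : Type*} (κ₀ : Set (Set E)) (F : Set E) : Prop :=
  F ∈ κ₀ ∧ F.Nonempty ∧ ∀ K ∈ κ₀, F ⊆ K → K = F

/-- The adjunction bijection between morphisms of representations out of the induced
leaf representation of a regular foliation, and morphisms of foliations into the
foliation associated with a clear and distinct representation of an integral space. -/
theorem repMor_folMor_bijection
    {E X Y : Type*} (κ₀ κ₁ : Set (Set E))
    (h₀ : IsConnectivity κ₀) (h₁ : IsConnectivity κ₁) (hreg : κ₀ ⊆ κ₁)
    (κX : Set (Set X)) (κY : Set (Set Y))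
    (hX : IsConnectivity κX) (hXi : IsIntegralCnct κX) (hY : IsConnectivity κY)
    (ρ : X → Set Y)
    (hne : ∀ x : X, (ρ x).Nonempty)
    (hrep : ∀ K ∈ κX, (⋃ x ∈ K, ρ x) ∈ κY)
    (hclear : ∀ A : Set X, A ∉ κX → (⋃ x ∈ A, ρ x) ∉ κY)
    (hdist : ∀ x y : X, x ≠ y → ρ x ∩ ρ y = ∅)
    -- the induced leaf structure on the set of leaves of the foliation
    (κdown : Set (Set {F : Set E // IsLeaf κ₀ F}))
    (hκdown : κdown = {𝒜 : Set {F : Set E // IsLeaf κ₀ F} | (⋃ F ∈ 𝒜, F.1) ∈ κ₁})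
    -- the internal structure of the foliation associated with ρ
    (κ₀' : Set (Set Y))
    (hκ₀' : κ₀' = generated {K : Set Y | K ∈ κY ∧ ∃ a : X, K ⊆ ρ a})
    -- representation morphisms
    (RepMor : ({F : Set E // IsLeaf κ₀ F} → X) → (E → Y) → Prop)
    (hRepMor : ∀ α β, RepMor α β ↔
      ((∀ 𝒜 ∈ κdown, α '' 𝒜 ∈ κX) ∧ (∀ K ∈ κ₁, β '' K ∈ κY) ∧
        ∀ F : {F : Set E // IsLeaf κ₀ F}, β '' F.1 ⊆ ρ (α F)))
    -- foliation morphisms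
    (FolMor : (E → Y) → Prop)
    (hFolMor : ∀ β, FolMor β ↔
      ((∀ K ∈ κ₀, β '' K ∈ κ₀') ∧ (∀ K ∈ κ₁, β '' K ∈ κY))) :
    (∀ α β, RepMor α β → FolMor β) ∧
    (∀ β, FolMor β → ∃! α, RepMor α β) := by
  subst hκdown hκ₀'
  classical
  set S : Set (Set Y) := {K : Set Y | K ∈ κY ∧ ∃ a : X, K ⊆ ρ a} with hS
  have hρY : ∀ x, ρ x ∈ κY := by
    intro x
    have := hrep {x} (hXi x)
    simpa using this
  have huniq : ∀ (B : Set Y) (a b : X), B.Nonempty → B ⊆ ρ a → B ⊆ ρ b → a = b := by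
    rintro B a b ⟨y, hy⟩ ha hb
    by_contra h
    have hd := hdist a b h
    have : y ∈ ρ a ∩ ρ b := ⟨ha hy, hb hy⟩
    rw [hd] at this
    exact this
  -- insert ∅ S is a connectivity structure
  have hIns : IsConnectivity (insert ∅ S) := by
    constructor
    · exact Set.mem_insert _ _
    · rintro ℐ hℐ ⟨y, hy⟩
      simp only [Set.mem_sInter] at hy
      have hℐS : ℐ ⊆ S := by
        intro K hK
        rcases hℐ hK with h | h
        · exact absurd (hy K hK) (by rw [h]; exact not_false_iff.mpr (by simp) |>.elim)
        · exact h
      rcases Set.eq_empty_or_nonempty ℐ with h | ⟨K₀, hK₀⟩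
      · simp [h]
      · obtain ⟨hK₀Y, a₀, hK₀a⟩ := hℐS hK₀
        refine Or.inr ⟨hY.2 ℐ (fun K hK => (hℐS hK).1) ⟨y, Set.mem_sInter.mpr hy⟩, a₀, ?_⟩
        rintro z ⟨K, hK, hzK⟩
        obtain ⟨hKY, a, hKa⟩ := hℐS hK
        have hay : a = a₀ :=
          huniq {y} a a₀ (Set.singleton_nonempty y)
            (by intro w hw; rcases hw with rfl; exact hKa (hy K hK))
            (by intro w hw; rcases hw with rfl; exact hK₀a (hy K₀ hK₀))
        rw [← hay]
        exact hKa hzK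
  have hgen_sub : generated S ⊆ insert ∅ S :=
    Set.sInter_subset_of_mem ⟨hIns, Set.subset_insert _ _⟩
  have hS_sub : S ⊆ generated S := by
    intro K hK
    exact Set.mem_sInter.mpr fun κ hκ => hκ.2 hK
  have hempty_gen : (∅ : Set Y) ∈ generated S :=
    Set.mem_sInter.mpr fun κ hκ => hκ.1.1
  -- leaf existence
  have hleaf : ∀ K ∈ κ₀, K.Nonempty → ∃ F, IsLeaf κ₀ F ∧ K ⊆ F := by
    intro K hK hKne
    have hsub : K ⊆ ⋂₀ {L | L ∈ κ₀ ∧ K ⊆ L} :=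
      Set.subset_sInter fun L hL => hL.2
    have hmem : ⋃₀ {L | L ∈ κ₀ ∧ K ⊆ L} ∈ κ₀ :=
      h₀.2 _ (fun L hL => hL.1) (hKne.mono hsub)
    have hKsub : K ⊆ ⋃₀ {L | L ∈ κ₀ ∧ K ⊆ L} :=
      Set.subset_sUnion_of_mem ⟨hK, subset_rfl⟩
    refine ⟨_, ⟨hmem, hKne.mono hKsub, ?_⟩, hKsub⟩
    intro L hL hFL
    exact subset_antisymm (Set.subset_sUnion_of_mem ⟨hL, hKsub.trans hFL⟩) hFL
  constructor
  · intro α β hαβ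
    rw [hRepMor] at hαβ
    obtain ⟨hα, hβ1, hβ2⟩ := hαβ
    rw [hFolMor]
    refine ⟨?_, hβ1⟩
    intro K hK
    rcases K.eq_empty_or_nonempty with rfl | hKne
    · simpa using hempty_gen
    · obtain ⟨F, hF, hKF⟩ := hleaf K hK hKne
      exact hS_sub ⟨hβ1 K (hreg hK), α ⟨F, hF⟩,
        (Set.image_mono (f := β) hKF).trans (hβ2 ⟨F, hF⟩)⟩
  · intro β hβ
    rw [hFolMor] at hβ
    obtain ⟨hβ0, hβ1⟩ := hβ
    have hne' : ∀ F : {F : Set E // IsLeaf κ₀ F}, (β '' F.1).Nonempty :=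
      fun F => F.2.2.1.image β
    have hspec : ∀ F : {F : Set E // IsLeaf κ₀ F}, ∃ a, β '' F.1 ⊆ ρ a := by
      rintro F
      have h1 : β '' F.1 ∈ generated S := hβ0 F.1 F.2.1
      rcases hgen_sub h1 with h | h
      · exact absurd h (hne' F).ne_empty
      · exact h.2
    choose α hα using hspec
    have hRep : RepMor α β := by
      rw [hRepMor]
      refine ⟨?_, hβ1, hα⟩
      intro 𝒜 h𝒜
      simp only [Set.mem_setOf_eq] at h𝒜
      rcases Set.eq_empty_or_nonempty 𝒜 with rfl | ⟨F₀, hF₀⟩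
      · simpa using hX.1
      · set U : Set E := ⋃ F ∈ 𝒜, F.1 with hU
        have hβU : β '' U ∈ κY := hβ1 U h𝒜
        have hβFU : ∀ F ∈ 𝒜, β '' F.1 ⊆ β '' U := fun F hF =>
          Set.image_mono (f := β) (Set.subset_biUnion_of_mem hF)
        have hβUne : (β '' U).Nonempty := (hne' F₀).mono (hβFU F₀ hF₀)
        have hβUsub : β '' U ⊆ ⋃ F ∈ 𝒜, ρ (α F) := by
          rw [hU, Set.image_iUnion₂]
          exact Set.iUnion₂_mono fun F hF => (hα F).trans le_rfl
        have hmem : ∀ F ∈ 𝒜, (β '' U ∪ ρ (α F)) ∈ κY := by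
          intro F hF
          have h := hY.2 {β '' U, ρ (α F)}
            (by rintro K (rfl | rfl) <;> [exact hβU; exact hρY (α F)])
            (by
              rw [Set.sInter_pair]
              exact (hne' F).mono (Set.subset_inter (hβFU F hF) (hα F)))
          rwa [Set.sUnion_pair] at h
        have hmain : (⋃ F ∈ 𝒜, ρ (α F)) ∈ κY := by
          have key := hY.2 ((fun F => β '' U ∪ ρ (α F)) '' 𝒜)
            (by rintro K ⟨F, hF, rfl⟩; exact hmem F hF)
            (by
              refine hβUne.mono (Set.subset_sInter ?_)
              rintro K ⟨F, hF, rfl⟩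
              exact Set.subset_union_left)
          have heq : ⋃₀ ((fun F => β '' U ∪ ρ (α F)) '' 𝒜) = ⋃ F ∈ 𝒜, ρ (α F) := by
            rw [Set.sUnion_image]
            refine subset_antisymm ?_ ?_
            · exact Set.iUnion₂_subset fun F hF =>
                Set.union_subset hβUsub (Set.subset_biUnion_of_mem (u := fun F => ρ (α F)) hF)
            · exact Set.iUnion₂_mono fun F hF => Set.subset_union_right
          rwa [heq] at key
        have himg : (⋃ x ∈ α '' 𝒜, ρ x) = ⋃ F ∈ 𝒜, ρ (α F) := by
          rw [Set.biUnion_image]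
        by_contra h
        exact hclear _ h (by rwa [himg])
    refine ⟨α, hRep, ?_⟩
    intro α' hα'
    rw [hRepMor] at hα'
    funext F
    exact huniq (β '' F.1) (α' F) (α F) (hne' F) (hα'.2.2 F) (hα F)
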